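/- The quasi-trigonometric polynomial identity (1/10) Σ_{j=0}^9 e^{−2πi d_j w} = (1/10)(Σ_{j=0}^4 e^{−2πijw})(1 + e^{−2πi(5/√10)w}) holds for all real w, where (d₀,…,d₉) = (0, 1, 2, 3, 4, 5/√10, 1+5/√10, 2+5/√10, 3+5/√10, 4+5/√10), and the set {d₀,…,d₉} is not contained in any set of the form aℤ + b with a ≠ 0. -/

import Mathlib

/-- Factorization of the mask and non-lattice property of the translation set. -/
theorem stmt12 (d : Fin 10 → ℝ)
    (hd : d = ![0, 1, 2, 3, 4, 5 / Real.sqrt 10, 1 + 5 / Real.sqrt 10,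
      2 + 5 / Real.sqrt 10, 3 + 5 / Real.sqrt 10, 4 + 5 / Real.sqrt 10]) :
    (∀ w : ℝ, (1 : ℂ) / 10 * ∑ j, Complex.exp (-2 * Real.pi * Complex.I * d j * w) =
      (1 : ℂ) / 10 * (∑ j ∈ Finset.range 5,
        Complex.exp (-2 * Real.pi * Complex.I * j * w)) *
        (1 + Complex.exp (-2 * Real.pi * Complex.I * (5 / Real.sqrt 10) * w))) ∧
    ¬ ∃ (a b : ℝ), a ≠ 0 ∧ ∀ j : Fin 10, ∃ n : ℤ, d j = a * n + b := by
  have hs : Irrational (Real.sqrt 10) := irrational_sqrt_ofNat_iff.mpr (by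
    rintro ⟨k, hk⟩
    have h4 : k ≤ 4 := by nlinarith
    interval_cases k <;> omega)
  constructor
  · intro w
    subst hd
    simp only [Fin.sum_univ_succ, Finset.sum_range_succ, Finset.sum_range_zero,
      Matrix.cons_val_zero, Matrix.cons_val_one, Matrix.head_cons, Matrix.cons_val_succ,
      Fin.sum_univ_zero]
    push_cast
    ring_nf
    simp only [← Complex.exp_add]
    ring_nf
  · rintro ⟨a, b, ha, h⟩
    obtain ⟨n0, h0⟩ := h 0
    obtain ⟨n1, h1⟩ := h 1
    obtain ⟨n5, h5⟩ := h 5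
    subst hd
    simp only [Matrix.cons_val_zero, Matrix.cons_val_one, Matrix.head_cons,
      Matrix.cons_val_succ, show (5 : Fin 10) = ((4 : Fin 9).succ : Fin 10) from rfl,
      show (1 : Fin 10) = ((0 : Fin 9).succ : Fin 10) from rfl] at h0 h1 h5
    norm_num at h0 h1 h5
    change 5 / Real.sqrt 10 = a * ↑n5 + b at h5
    have hsq : Real.sqrt 10 ≠ 0 := by positivity
    have e1 : a * (n1 - n0) = 1 := by push_cast; linarith
    have e5 : a * (n5 - n0) * Real.sqrt 10 = 5 := by
      have : a * (n5 - n0) = 5 / Real.sqrt 10 := by push_cast; linarith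
      rw [this]; field_simp
    have hne : (n5 : ℝ) - n0 ≠ 0 := by
      intro h'
      rw [h'] at e5; simp at e5
    have : Real.sqrt 10 = ((5 * (n1 - n0) : ℤ) : ℝ) / ((n5 - n0 : ℤ) : ℝ) := by
      push_cast
      rw [eq_div_iff hne]
      have := mul_left_cancel₀ ha (by linarith [e1, e5] :
        a * ((Real.sqrt 10) * ((n5:ℝ) - n0)) = a * (5 * ((n1:ℝ) - n0)))
      linarith [this]
    exact (irrational_iff_ne_rational _).mp hs _ _ (by exact_mod_cast hne) this
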